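/- Let $r$ be an odd prime and let $x, t$ be positive integers with $\gcd(x, r) = 1$. Suppose the multiplicative order of $x$ modulo $r^t$ is $r^h$ for some $0 \le h \le t - 1$. Then $r^t$ does not divide $\Psi_s(x) = 1 + x + \cdots + x^{s-1}$ for any $s$ with $1 \le s \le r^t - 1$. -/

import Mathlib

theorem stmt_10 (r x t h : ℕ) (hr : r.Prime) (hrodd : Odd r) (hx : 0 < x) (ht : 0 < t)
    (hcop : Nat.gcd x r = 1) (hh : h ≤ t - 1)
    (hord : orderOf (x : ZMod (r ^ t)) = r ^ h) :
    ∀ s, 1 ≤ s → s ≤ r ^ t - 1 → ¬ r ^ t ∣ ∑ i ∈ Finset.range s, x ^ i := by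
  haveI : Fact r.Prime := ⟨hr⟩
  have hr2 : 2 ≤ r := hr.two_le
  have hrt2 : 2 ≤ r ^ t := le_trans hr2 (Nat.le_self_pow ht.ne' r)
  have hrdx : ¬ r ∣ x := by
    intro hd
    have : r ∣ Nat.gcd x r := Nat.dvd_gcd hd dvd_rfl
    rw [hcop] at this
    have := Nat.le_of_dvd one_pos this
    omega
  -- Step 1 : x ≡ 1 mod r
  have hxr : (x : ZMod r) = 1 := by
    have hx0 : (x : ZMod r) ≠ 0 := by
      rw [Ne, ZMod.natCast_eq_zero_iff]
      exact hrdx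
    have h1 : orderOf (x : ZMod r) ∣ r ^ h := by
      have := orderOf_map_dvd (ZMod.castHom (dvd_pow_self r ht.ne') (ZMod r)).toMonoidHom
        (x : ZMod (r ^ t))
      rw [hord] at this
      simpa using this
    have h2 : orderOf (x : ZMod r) ∣ r - 1 :=
      orderOf_dvd_of_pow_eq_one (ZMod.pow_card_sub_one_eq_one hx0)
    obtain ⟨k, hk, hke⟩ := (Nat.dvd_prime_pow hr).mp h1
    rcases Nat.eq_zero_or_pos k with rfl | hkpos
    · rw [← orderOf_eq_one_iff]
      simpa using hke
    · exfalso
      have : r ∣ r - 1 := dvd_trans (dvd_pow_self r hkpos.ne') (hke ▸ h2)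
      have := Nat.le_of_dvd (by omega) this
      omega
  intro s hs1 hs2 hdvd
  rcases eq_or_lt_of_le (Nat.succ_le_of_lt hx) with hx1 | hx2
  · -- x = 1
    obtain rfl : x = 1 := hx1.symm
    simp only [one_pow, Finset.sum_const, Finset.card_range, smul_eq_mul, mul_one] at hdvd
    have := Nat.le_of_dvd (by omega) hdvd
    omega
  · -- x ≥ 2
    have hxy : (r : ℤ) ∣ (x : ℤ) - 1 := by
      rw [← ZMod.intCast_zmod_eq_zero_iff_dvd]
      push_cast
      rw [hxr]
      ring
    have hxd : ¬ (r : ℤ) ∣ (x : ℤ) := by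
      rwa [Int.natCast_dvd_natCast]
    have hlte := Int.emultiplicity_pow_sub_pow hr hrodd hxy hxd s
    rw [one_pow] at hlte
    have hgeom : ((x : ℤ) ^ s - 1) = ((x : ℤ) - 1) * ∑ i ∈ Finset.range s, (x : ℤ) ^ i := by
      rw [mul_comm, geom_sum_mul]
    have hprime : Prime (r : ℤ) := Nat.prime_iff_prime_int.mp hr
    rw [hgeom, emultiplicity_mul hprime] at hlte
    have hfin : FiniteMultiplicity (r : ℤ) ((x : ℤ) - 1) := by
      rw [Int.finiteMultiplicity_iff]
      constructor
      · simpa using hr.ne_one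
      · intro hc
        have : (x : ℤ) = 1 := by linarith
        have : x = 1 := by exact_mod_cast this
        omega
    have hcancel : emultiplicity (r : ℤ) (∑ i ∈ Finset.range s, (x : ℤ) ^ i)
        = emultiplicity r s :=
      WithTop.add_left_cancel (finiteMultiplicity_iff_emultiplicity_ne_top.1 hfin) hlte
    have hdvdZ : (r : ℤ) ^ t ∣ ∑ i ∈ Finset.range s, (x : ℤ) ^ i := by
      have := Int.natCast_dvd_natCast.mpr hdvd
      push_cast at this
      exact this
    have hle : (t : ℕ∞) ≤ emultiplicity r s := by
      rw [← hcancel]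
      exact le_emultiplicity_of_pow_dvd hdvdZ
    have : r ^ t ∣ s := pow_dvd_of_le_emultiplicity hle
    have := Nat.le_of_dvd (by omega) this
    omega
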